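/- arXiv:1607.06942 — 4 statements merged into one kernel-verified Lean document; each statement's English description precedes it below -/
import Mathlib

section
/- For a poset X with the Alexandrov topology (open sets are up-sets), any functor F : X → D into a complete category D extends, via right Kan extension along the inclusion x ↦ U_x of X^op into Alexandrov opens, to a sheaf on X; i.e., for every Alexandrov open U and every open cover {U_i} of U, the canonical map lim_{x∈U} F(x) → lim over the nerve of the cover is an isomorphism. -/
/-!
STATEMENT 2: For a poset `X` with the Alexandrov topology (open sets are up-sets),
any functor `F : X ⥤ D` into a complete category extends, via right Kan extension
(`U ↦ lim_{x ∈ U} F x`), to a sheaf: for every Alexandrov open `U₀` and every open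
cover `{U i}` of `U₀` by Alexandrov opens, the canonical cone with apex
`lim_{x ∈ U₀} F x` over the nerve of the cover is a limit cone.
-/

open CategoryTheory Limits Opposite

variable {X : Type} [PartialOrder X] {D : Type*} [Category D] [HasLimitsOfSize.{0, 0} D]

/-- The restriction of `F : X ⥤ D` to a subset `S ⊆ X`. -/
def restrictTo (F : X ⥤ D) (S : Set X) : S ⥤ D :=
  (Subtype.mono_coe (fun x => x ∈ S)).functor ⋙ F

/-- The value of the right Kan extension of `F` on a subset: `lim_{x ∈ S} F x`. -/
noncomputable def ranValue (F : X ⥤ D) (S : Set X) : D :=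
  limit (restrictTo F S)

/-- Inclusion of subtypes induced by `S ⊆ T`. -/
def subIncl {S T : Set X} (h : S ⊆ T) : (S : Type) ⥤ (T : Type) :=
  Monotone.functor (f := fun x => (⟨x.1, h x.2⟩ : T)) (fun _ _ hab => hab)

/-- The restriction map `lim_{x ∈ T} F x ⟶ lim_{x ∈ S} F x` for `S ⊆ T`. -/
noncomputable def ranMap (F : X ⥤ D) {S T : Set X} (h : S ⊆ T) :
    ranValue F T ⟶ ranValue F S :=
  limit.pre (restrictTo F T) (subIncl h)

lemma ranMap_comp (F : X ⥤ D) {S T V : Set X} (h1 : S ⊆ T) (h2 : T ⊆ V) :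
    ranMap F h2 ≫ ranMap F h1 = ranMap F (h1.trans h2) := by
  apply limit.hom_ext
  intro j
  erw [Category.assoc]
  show limit.pre (restrictTo F V) (subIncl h2) ≫
      (limit.pre (restrictTo F T) (subIncl h1) ≫ limit.π (restrictTo F S) j) = _
  have e1 : (limit.pre (restrictTo F T) (subIncl h1) ≫ limit.π (restrictTo F S) j :
      limit (restrictTo F T) ⟶ _) = limit.π (restrictTo F T) ((subIncl h1).obj j) :=
    limit.pre_π _ _ _
  erw [e1]
  exact (limit.pre_π (restrictTo F V) (subIncl h2) ((subIncl h1).obj j)).trans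
    (limit.pre_π (restrictTo F V) (subIncl (h1.trans h2)) j).symm

lemma ranMap_id (F : X ⥤ D) {S : Set X} (h : S ⊆ S) : ranMap F h = 𝟙 _ := by
  apply limit.hom_ext
  intro j
  erw [Category.id_comp]
  exact limit.pre_π _ _ _

/-- The nerve of a family of subsets of `X`. -/
def AlexNerve {ι : Type} (U : ι → Set X) : Type :=
  {I : Finset ι // I.Nonempty ∧ (I.inf U).Nonempty}

instance {ι : Type} (U : ι → Set X) : PartialOrder (AlexNerve U) :=
  Subtype.partialOrder _

/-- The diagram over the nerve sending `I` to `lim_{x ∈ U_I} F x`. -/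
noncomputable def nerveDiagram (F : X ⥤ D) {ι : Type} (U : ι → Set X) :
    AlexNerve U ⥤ D where
  obj I := ranValue F (I.1.inf U)
  map {I J} f := ranMap F (Finset.inf_mono (leOfHom f))
  map_id I := ranMap_id F _
  map_comp {I J K} f g := (ranMap_comp F _ _).symm

/-- The canonical cone with apex `lim_{x ∈ U₀} F x` over the nerve diagram of a
family of subsets of `U₀`. -/
noncomputable def nerveCone (F : X ⥤ D) {ι : Type} (U : ι → Set X) (U₀ : Set X)
    (h : ∀ i, U i ⊆ U₀) : Cone (nerveDiagram F U) where
  pt := ranValue F U₀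
  π :=
    { app := fun I =>
        ranMap F (by
          obtain ⟨i, hi⟩ := I.2.1
          exact le_trans (Finset.inf_le hi) (h i))
      naturality := by
        intro I J f
        dsimp [nerveDiagram]
        rw [Category.id_comp, ranMap_comp] }

lemma ranMap_π (F : X ⥤ D) {S T : Set X} (h : S ⊆ T) (j : (S : Type)) :
    ranMap F h ≫ limit.π (restrictTo F S) j =
      limit.π (restrictTo F T) ⟨j.1, h j.2⟩ :=
  limit.pre_π (restrictTo F T) (subIncl h) j

lemma cone_pi_w (F : X ⥤ D) {ι : Type} {U : ι → Set X} (c : Cone (nerveDiagram F U))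
    {I K : AlexNerve U} (hIK : I ≤ K) {x : X} (hx : x ∈ K.1.inf U)
    (hx' : x ∈ I.1.inf U) :
    c.π.app I ≫ limit.π (restrictTo F (I.1.inf U)) ⟨x, hx'⟩ =
      c.π.app K ≫ limit.π (restrictTo F (K.1.inf U)) ⟨x, hx⟩ := by
  rw [← c.w (homOfLE hIK)]; erw [Category.assoc]
  congr 1
  exact (ranMap_π F (Finset.inf_mono hIK) ⟨x, hx⟩).symm

lemma cone_pi_indep (F : X ⥤ D) {ι : Type} {U : ι → Set X} (c : Cone (nerveDiagram F U))
    (I J : AlexNerve U) {x : X} (hxI : x ∈ I.1.inf U) (hxJ : x ∈ J.1.inf U) :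
    c.π.app I ≫ limit.π (restrictTo F (I.1.inf U)) ⟨x, hxI⟩ =
      c.π.app J ≫ limit.π (restrictTo F (J.1.inf U)) ⟨x, hxJ⟩ := by
  classical
  have hxK : x ∈ (I.1 ∪ J.1).inf U := by
    rw [Finset.inf_union]; exact ⟨hxI, hxJ⟩
  obtain ⟨i, hi⟩ := I.2.1
  let K : AlexNerve U := ⟨I.1 ∪ J.1, ⟨i, Finset.mem_union_left _ hi⟩, ⟨x, hxK⟩⟩
  have h1 : I ≤ K := Finset.subset_union_left
  have h2 : J ≤ K := Finset.subset_union_right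
  exact (cone_pi_w F c h1 hxK hxI).trans (cone_pi_w F c h2 hxK hxJ).symm

/-- A singleton element of the nerve. -/
def singNerve {ι : Type} {U : ι → Set X} (i : ι) {x : X} (hx : x ∈ U i) : AlexNerve U :=
  ⟨{i}, ⟨i, Finset.mem_singleton_self i⟩, ⟨x, by simpa using hx⟩⟩

/-- The right Kan extension of any functor `F : X ⥤ D` along the inclusion of a poset
into its Alexandrov opens is a sheaf: for every up-set `U₀` and every cover of `U₀` by
up-sets, the canonical cone over the nerve of the cover is a limit cone. -/
theorem alexandrov_ran_is_sheaf (F : X ⥤ D) (U₀ : Set X) (h₀ : IsUpperSet U₀)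
    {ι : Type} (U : ι → Set X) (hup : ∀ i, IsUpperSet (U i))
    (hle : ∀ i, U i ⊆ U₀) (hcov : (⋃ i, U i) = U₀) :
    Nonempty (IsLimit (nerveCone F U U₀ hle)) := by
  classical
  have hmem : ∀ x : (U₀ : Type), ∃ i, (x : X) ∈ U i := by
    intro x
    exact Set.mem_iUnion.mp (show (x : X) ∈ ⋃ i, U i from by rw [hcov]; exact x.2)
  choose f hf using hmem
  have hsing : ∀ x : (U₀ : Type), (x : X) ∈ (singNerve (f x) (hf x)).1.inf U := by
    intro x; simpa [singNerve] using hf x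
  -- the candidate lift for each cone
  let ψ : ∀ (c : Cone (nerveDiagram F U)) (x : (U₀ : Type)), c.pt ⟶ (restrictTo F U₀).obj x :=
    fun c x => c.π.app (singNerve (f x) (hf x)) ≫
      limit.π (restrictTo F ((singNerve (f x) (hf x)).1.inf U)) ⟨x, hsing x⟩
  have ψ_indep : ∀ (c : Cone (nerveDiagram F U)) (I : AlexNerve U) (x : (U₀ : Type))
      (hx : (x : X) ∈ I.1.inf U),
      ψ c x = c.π.app I ≫ limit.π (restrictTo F (I.1.inf U)) ⟨x, hx⟩ := by
    intro c I x hx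
    exact cone_pi_indep F c _ I (hsing x) hx
  have ψ_nat : ∀ (c : Cone (nerveDiagram F U)) (x y : (U₀ : Type)) (g : x ⟶ y),
      ψ c x ≫ (restrictTo F U₀).map g = ψ c y := by
    intro c x y g
    have hxy : (x : X) ≤ (y : X) := leOfHom g
    have hyUi : (y : X) ∈ U (f x) := (hup (f x)) hxy (hf x)
    have hy' : (y : X) ∈ (singNerve (f x) (hf x)).1.inf U := by
      simpa [singNerve] using hyUi
    set S : Set X := (singNerve (f x) (hf x)).1.inf U with hS
    let jx : ↥S := ⟨(x : X), hsing x⟩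
    let jy : ↥S := ⟨(y : X), hy'⟩
    let g' : jx ⟶ jy := homOfLE hxy
    have nat := limit.w (restrictTo F S) g'
    have e1 : ψ c x ≫ (restrictTo F U₀).map g =
        c.π.app (singNerve (f x) (hf x)) ≫
          (limit.π (restrictTo F S) jx ≫ (restrictTo F S).map g') := by
      erw [← Category.assoc]; rfl
    erw [e1, nat]
    exact (ψ_indep c _ y hy').symm
  -- the cone over `restrictTo F U₀` built from a cone over the nerve diagram
  let mkCone : ∀ c : Cone (nerveDiagram F U), Cone (restrictTo F U₀) := fun c =>
    { pt := c.pt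
      π :=
        { app := fun x => ψ c x
          naturality := fun x y g => by
            show 𝟙 c.pt ≫ ψ c y = ψ c x ≫ (restrictTo F U₀).map g
            rw [Category.id_comp]
            exact (ψ_nat c x y g).symm } }
  refine ⟨⟨fun c => limit.lift (restrictTo F U₀) (mkCone c), ?_, ?_⟩⟩
  · intro c I
    apply limit.hom_ext
    rintro ⟨x, hx⟩
    have hxU₀ : x ∈ U₀ := by
      obtain ⟨i, hi⟩ := I.2.1
      have hsub : I.1.inf U ⊆ U i := Finset.inf_le hi
      exact hle i (hsub hx)
    erw [Category.assoc]
    have e2 : (nerveCone F U U₀ hle).π.app I ≫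
        limit.π (restrictTo F (I.1.inf U)) ⟨x, hx⟩ =
        limit.π (restrictTo F U₀) ⟨x, hxU₀⟩ := ranMap_π F _ _
    erw [e2, limit.lift_π]
    exact ψ_indep c I ⟨x, hxU₀⟩ hx
  · intro c m hm
    show m = limit.lift (restrictTo F U₀) (mkCone c)
    refine limit.hom_ext (F := restrictTo F U₀) fun j => ?_
    obtain ⟨x, hxU₀⟩ := j
    rw [limit.lift_π]
    have e2 : (nerveCone F U U₀ hle).π.app (singNerve (f ⟨x, hxU₀⟩) (hf ⟨x, hxU₀⟩)) ≫
        limit.π (restrictTo F ((singNerve (f ⟨x, hxU₀⟩) (hf ⟨x, hxU₀⟩)).1.inf U))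
          ⟨x, hsing ⟨x, hxU₀⟩⟩ =
        limit.π (restrictTo F U₀) ⟨x, hxU₀⟩ := ranMap_π F _ _
    exact (show m ≫ limit.π (restrictTo F U₀) ⟨x, hxU₀⟩
        = m ≫ (nerveCone F U U₀ hle).π.app (singNerve (f ⟨x, hxU₀⟩) (hf ⟨x, hxU₀⟩)) ≫
            (limit.π (restrictTo F ((singNerve (f ⟨x, hxU₀⟩) (hf ⟨x, hxU₀⟩)).1.inf U))
              ⟨x, hsing ⟨x, hxU₀⟩⟩ : _ ⟶ (restrictTo F U₀).obj ⟨x, hxU₀⟩) by rw [e2]; rfl).trans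
      (show _ = ψ c ⟨x, hxU₀⟩ by
            erw [← Category.assoc, hm]; rfl)
end

section
/- Let X be a poset (the face poset of a cell complex), σ ∈ X, and W a vector space. The sheaf [σ]^W on X, defined by [σ]^W(τ) = W if τ ≤ σ and 0 otherwise, with identity restriction maps where nonzero, is an injective object in the category of functors X → Vect. -/
/-!
STATEMENT 7: For a poset `X`, a cell `σ ∈ X` and a vector space `W`, the elementary
sheaf `[σ]^W` — with value `W` on cells `τ ≤ σ` and `0` otherwise, identity
restriction maps where nonzero — is an injective object of the category of cellular
sheaves `[X, Vect_k]`.  (Here `[σ]^W (τ)` is modelled as `PLift (τ ≤ σ) → W`, which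
is `W` when `τ ≤ σ` and `0` otherwise; this is the pushforward `(i_σ)_* W`.)
-/

open CategoryTheory

/-- The elementary injective cellular sheaf `[σ]^W`, supported on the closure
`{τ : τ ≤ σ}` with value `W` and identity restriction maps. -/
def elementaryInjectiveSheaf (k : Type) [Field k] {X : Type} [PartialOrder X] (σ : X)
    (W : Type) [AddCommGroup W] [Module k W] : X ⥤ ModuleCat k where
  obj τ := ModuleCat.of k (PLift (τ ≤ σ) → W)
  map {τ τ'} h :=
    ModuleCat.ofHom
    { toFun := fun g p => g ⟨(leOfHom h).trans p.down⟩
      map_add' := fun _ _ => rfl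
      map_smul' := fun _ _ => rfl }
  map_id _ := rfl
  map_comp _ _ := rfl


/-- Every vector space over a field is an injective module. -/
theorem vectorSpace_module_injective (k : Type) [Field k] (W : Type) [AddCommGroup W]
    [Module k W] : Module.Injective k W where
  out X Y _ _ _ _ f hf g := by
    obtain ⟨l, hl⟩ := f.exists_leftInverse_of_injective (LinearMap.ker_eq_bot.mpr hf)
    exact ⟨g.comp l, fun x => by
      simpa using congrArg g (LinearMap.congr_fun hl x)⟩

/-- `[σ]^W` is an injective cellular sheaf. -/
theorem elementaryInjectiveSheaf_injective (k : Type) [Field k] {X : Type}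
    [PartialOrder X] (σ : X) (W : Type) [AddCommGroup W] [Module k W] :
    Injective (elementaryInjectiveSheaf k σ W) :=  by
  have hW : Injective (ModuleCat.of k W) :=
    Module.injective_object_of_injective_module (inj := vectorSpace_module_injective k W)
  constructor
  intro A B g f hf
  haveI : Mono (f.app σ) := ((NatTrans.mono_iff_mono_app f).mp hf) σ
  -- the map `A σ ⟶ W` obtained by evaluating `g` at `σ` and at the reflexivity proof
  let φ : A.obj σ ⟶ ModuleCat.of k W :=
    ModuleCat.ofHom ((LinearMap.proj (⟨le_refl σ⟩ : PLift (σ ≤ σ))).comp (g.app σ).hom)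
  let ψ : B.obj σ ⟶ ModuleCat.of k W := Injective.factorThru φ (f.app σ)
  have hψ : ∀ a : A.obj σ, ψ (f.app σ a) = g.app σ a ⟨le_refl σ⟩ := fun a =>
    congrFun (congrArg (fun (m : A.obj σ ⟶ ModuleCat.of k W) => m.hom.toFun)
      (Injective.comp_factorThru φ (f.app σ))) a
  refine ⟨{ app := fun τ => ModuleCat.ofHom (LinearMap.pi fun p : PLift (τ ≤ σ) =>
              ψ.hom.comp (B.map (homOfLE p.down)).hom), naturality := ?_ }, ?_⟩
  · intro τ τ' u
    ext b
    funext p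
    show ψ (B.map (homOfLE p.down) (B.map u b)) =
      ψ (B.map (homOfLE ((leOfHom u).trans p.down)) b)
    have hc : (u ≫ homOfLE p.down : τ ⟶ σ) = homOfLE ((leOfHom u).trans p.down) := rfl
    have := ConcreteCategory.congr_hom
      (show (B.map u ≫ B.map (homOfLE p.down) : B.obj τ ⟶ B.obj σ) =
        B.map (homOfLE ((leOfHom u).trans p.down)) by rw [← B.map_comp, hc]) b
    exact congrArg ψ this
  · ext τ a
    funext p
    show ψ (B.map (homOfLE p.down) (f.app τ a)) = g.app τ a p
    have h1 := ConcreteCategory.congr_hom (f.naturality (homOfLE p.down)) a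
    have h1' : B.map (homOfLE p.down) (f.app τ a) =
        f.app σ (A.map (homOfLE p.down) a) := h1.symm
    rw [h1', hψ]
    have h3 := congrFun (ConcreteCategory.congr_hom (g.naturality (homOfLE p.down)) a)
      (⟨le_refl σ⟩ : PLift (σ ≤ σ))
    exact h3
end

section
/- Let X be a finite poset. Every injective object of the functor category [X, Vect] is isomorphic to a finite direct sum of elementary injectives ⊕_σ [σ]^{V_σ}, where [σ]^V is the constant sheaf with value V supported on the down-set {τ : τ ≤ σ}. -/
/-!
STATEMENT 9: Let `X` be a finite poset.  Every injective object of the functor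
category `[X, Vect_k]` is isomorphic to a (finite) direct sum of elementary
injectives `⊕_σ [σ]^{V_σ}`, where `[σ]^V` is the constant sheaf with value `V`
supported on the down-set `{τ : τ ≤ σ}`.
-/

open CategoryTheory Limits

section Aux
variable {k : Type} [Field k] {X : Type} [PartialOrder X]

def elemLift {F : X ⥤ ModuleCat k} {σ : X} {W : Type} [AddCommGroup W] [Module k W]
    (φ : F.obj σ →ₗ[k] W) : F ⟶ elementaryInjectiveSheaf k σ W where
  app τ := ModuleCat.ofHom
    { toFun := fun x p => φ (F.map (homOfLE p.down) x)
      map_add' := by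
        intro x y; refine funext fun p => ?_
        show φ (F.map (homOfLE p.down) (x + y))
            = φ (F.map (homOfLE p.down) x) + φ (F.map (homOfLE p.down) y)
        rw [map_add, map_add]
      map_smul' := by
        intro c x; refine funext fun p => ?_
        show φ (F.map (homOfLE p.down) (c • x)) = c • φ (F.map (homOfLE p.down) x)
        rw [map_smul, map_smul] }
  naturality := by
    intro τ τ' h
    ext x
    refine funext fun p => ?_
    have e : h ≫ homOfLE p.down = homOfLE ((leOfHom h).trans p.down) := Subsingleton.elim _ _
    show φ (F.map (homOfLE p.down) (F.map h x)) = φ (F.map (homOfLE ((leOfHom h).trans p.down)) x)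
    rw [← e, F.map_comp]
    rfl

lemma elem_hom_ext {F : X ⥤ ModuleCat k} {σ : X} {W : Type} [AddCommGroup W] [Module k W]
    (f g : F ⟶ elementaryInjectiveSheaf k σ W) (h : f.app σ = g.app σ) : f = g := by
  ext τ x
  refine funext fun p => ?_
  have n1 := congrFun (DFunLike.congr_fun (congrArg ModuleCat.Hom.hom (f.naturality (homOfLE p.down))) x)
      (⟨le_rfl⟩ : PLift (σ ≤ σ))
  have n2 := congrFun (DFunLike.congr_fun (congrArg ModuleCat.Hom.hom (g.naturality (homOfLE p.down))) x)
      (⟨le_rfl⟩ : PLift (σ ≤ σ))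
  have e1 : f.app τ x p = f.app σ (F.map (homOfLE p.down) x) ⟨le_rfl⟩ := n1.symm
  have e2 : g.app τ x p = g.app σ (F.map (homOfLE p.down) x) ⟨le_rfl⟩ := n2.symm
  rw [e1, e2, h]

/-- post-composition map between elementary sheaves -/
def elMap {σ : X} {A B : Type} [AddCommGroup A] [Module k A] [AddCommGroup B] [Module k B]
    (φ : A →ₗ[k] B) : elementaryInjectiveSheaf k σ A ⟶ elementaryInjectiveSheaf k σ B where
  app τ := ModuleCat.ofHom
    { toFun := fun g => φ ∘ g
      map_add' := by intro x y; funext p; show φ (x p + y p) = φ (x p) + φ (y p); rw [map_add]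
      map_smul' := by intro c x; funext p; show φ (c • x p) = c • φ (x p); rw [map_smul] }
  naturality := by intro τ τ' h; rfl

lemma elMap_comp {σ : X} {A B C : Type} [AddCommGroup A] [Module k A] [AddCommGroup B] [Module k B]
    [AddCommGroup C] [Module k C] (φ : A →ₗ[k] B) (ψ : B →ₗ[k] C) :
    (elMap (σ := σ) φ) ≫ elMap ψ = elMap (ψ.comp φ) := rfl

lemma elMap_id {σ : X} {A : Type} [AddCommGroup A] [Module k A] :
    elMap (σ := σ) (LinearMap.id (R := k) (M := A)) = 𝟙 _ := rfl

lemma elMap_zero {σ : X} {A B : Type} [AddCommGroup A] [Module k A] [AddCommGroup B] [Module k B] :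
    elMap (σ := σ) (0 : A →ₗ[k] B) = 0 := by
  ext τ g
  refine funext fun p => ?_
  rfl

lemma hom_ext_of_subsingleton {F G : X ⥤ ModuleCat k} (hs : ∀ τ, Subsingleton (F.obj τ))
    (f g : F ⟶ G) : f = g := by
  ext τ x
  have : x = 0 := @Subsingleton.elim _ (hs τ) _ _
  rw [this, map_zero, map_zero]

lemma subsingleton_plift_fun {p : Prop} (hp : ¬p) (W : Type) : Subsingleton (PLift p → W) :=
  ⟨fun a b => funext fun q => absurd q.down hp⟩

lemma el_obj_subsingleton (σ τ : X) {W : Type} [AddCommGroup W] [Module k W] [hW : Subsingleton W] :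
    Subsingleton ((elementaryInjectiveSheaf k σ W).obj τ) :=
  ⟨fun a b => funext fun _ => Subsingleton.elim _ _⟩

end Aux

section Aux2
variable {k : Type} [Field k] {X : Type} [PartialOrder X] [DecidableEq X]

/-- evaluation of a `PLift`-indexed function, or zero -/
def diteEval (k : Type) [Field k] (p : Prop) [Decidable p] (W : Type) [AddCommGroup W]
    [Module k W] : (PLift p → W) →ₗ[k] W where
  toFun g := if h : p then g ⟨h⟩ else 0
  map_add' x y := by
    show (if h : p then (x + y) ⟨h⟩ else 0)
        = (if h : p then x ⟨h⟩ else 0) + (if h : p then y ⟨h⟩ else 0)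
    by_cases h : p
    · simp only [dif_pos h]; rfl
    · simp only [dif_neg h, add_zero]
  map_smul' c x := by
    show (if h : p then (c • x) ⟨h⟩ else 0) = (RingHom.id k) c • (if h : p then x ⟨h⟩ else 0)
    by_cases h : p
    · simp only [dif_pos h]; rfl
    · simp only [dif_neg h, RingHom.id_apply, smul_zero]

/-- constant functions -/
def constFun (k : Type) [Field k] (p : Prop) (W : Type) [AddCommGroup W] [Module k W] :
    W →ₗ[k] (PLift p → W) where
  toFun x _ := x
  map_add' _ _ := rfl
  map_smul' _ _ := rfl

/-- skyscraper functor at σ with value W (zero maps elsewhere) -/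
def skyFunctor (k : Type) [Field k] {X : Type} [PartialOrder X] [DecidableEq X] (σ : X)
    (W : Type) [AddCommGroup W] [Module k W] : X ⥤ ModuleCat k where
  obj τ := ModuleCat.of k (PLift (τ = σ) → W)
  map {τ τ'} _ := ModuleCat.ofHom ((constFun k (τ' = σ) W).comp (diteEval k (τ = σ) W))
  map_id τ := by
    refine ModuleCat.hom_ext (LinearMap.ext fun g => ?_)
    refine funext fun p => ?_
    show (if h : τ = σ then g ⟨h⟩ else 0) = g p
    rcases p with ⟨hp⟩
    rw [dif_pos hp]
  map_comp {τ τ' τ''} f g := by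
    refine ModuleCat.hom_ext (LinearMap.ext fun x => ?_)
    refine funext fun p => ?_
    show (if hh : τ = σ then x ⟨hh⟩ else 0)
        = (if hh : τ' = σ then (if hh2 : τ = σ then x ⟨hh2⟩ else 0) else 0)
    by_cases hh : τ = σ
    · have hτ' : τ' = σ := le_antisymm ((leOfHom g).trans p.down.le) (hh ▸ leOfHom f)
      simp only [dif_pos hh, dif_pos hτ']
    · simp only [dif_neg hh]
      by_cases hh' : τ' = σ
      · simp only [dif_pos hh', dite_eq_ite, ite_self]
      · simp only [dif_neg hh']

/-- the map from the skyscraper into `I`, defined when `I` vanishes strictly above σ -/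
def skyToI (I : X ⥤ ModuleCat k) (σ : X)
    (hmax : ∀ ρ, σ < ρ → Subsingleton (I.obj ρ)) :
    skyFunctor k σ (I.obj σ) ⟶ I where
  app τ := ModuleCat.ofHom ((if hh : τ = σ then I.map (eqToHom hh.symm) else 0).hom.comp
      (diteEval k (τ = σ) (I.obj σ)))
  naturality := by
    intro τ τ' h
    ext g
    show (if hh : τ' = σ then I.map (eqToHom hh.symm) else 0)
          (if hh : τ' = σ then (if hh2 : τ = σ then g ⟨hh2⟩ else 0) else 0)
        = I.map h ((if hh : τ = σ then I.map (eqToHom hh.symm) else 0)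
            (if hh : τ = σ then g ⟨hh⟩ else 0))
    by_cases h1 : τ = σ
    · by_cases h2 : τ' = σ
      · simp only [dif_pos h1, dif_pos h2]
        have e : eqToHom h1.symm ≫ h = eqToHom h2.symm := Subsingleton.elim _ _
        show I.map (eqToHom h2.symm) (g ⟨h1⟩)
            = (I.map (eqToHom h1.symm) ≫ I.map h) (g ⟨h1⟩)
        rw [← I.map_comp, e]
      · have hlt : σ < τ' := lt_of_le_of_ne (h1 ▸ leOfHom h) (Ne.symm h2)
        have := hmax τ' hlt
        exact Subsingleton.elim _ _
    · simp only [dif_neg h1]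
      by_cases h2 : τ' = σ
      · simp only [dif_pos h2, dite_eq_ite, ite_self, map_zero, LinearMap.zero_apply]
      · simp only [dif_neg h2, dite_eq_ite, ite_self, map_zero, LinearMap.zero_apply]

/-- the canonical mono from the skyscraper into the elementary sheaf -/
def skyToEl (σ : X) (W : Type) [AddCommGroup W] [Module k W] :
    skyFunctor k σ W ⟶ elementaryInjectiveSheaf k σ W where
  app τ := ModuleCat.ofHom ((constFun k (τ ≤ σ) W).comp (diteEval k (τ = σ) W))
  naturality := by
    intro τ τ' h
    ext g
    refine funext fun p => ?_
    show (if hh : τ' = σ then (if hh2 : τ = σ then g ⟨hh2⟩ else 0) else 0)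
        = (if hh : τ = σ then g ⟨hh⟩ else 0)
    by_cases hh : τ = σ
    · have hτ' : τ' = σ := le_antisymm p.down (hh ▸ leOfHom h)
      simp only [dif_pos hh, dif_pos hτ']
    · simp only [dif_neg hh]
      by_cases hh' : τ' = σ
      · simp only [dif_pos hh', dite_eq_ite, ite_self]
      · simp only [dif_neg hh']

lemma skyToEl_mono (σ : X) (W : Type) [AddCommGroup W] [Module k W] :
    Mono (skyToEl (k := k) σ W) := by
  have H : ∀ τ, Mono ((skyToEl (k := k) σ W).app τ) := by
    intro τ
    rw [ModuleCat.mono_iff_injective]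
    by_cases hh : τ = σ
    · intro g g' hgg'
      funext q
      have h2 := congrFun hgg' ⟨le_of_eq hh⟩
      have e1 : (skyToEl (k := k) σ W).app τ g ⟨le_of_eq hh⟩
          = if h2 : τ = σ then g ⟨h2⟩ else 0 := rfl
      have e2 : (skyToEl (k := k) σ W).app τ g' ⟨le_of_eq hh⟩
          = if h2 : τ = σ then g' ⟨h2⟩ else 0 := rfl
      rw [e1, e2, dif_pos hh, dif_pos hh] at h2
      rcases q with ⟨hq⟩
      exact h2
    · intro g g' _
      exact @Subsingleton.elim _ (subsingleton_plift_fun hh W) _ _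
  exact NatTrans.mono_of_mono_app _

end Aux2

section Aux3
variable {k : Type} [Field k] {X : Type} [PartialOrder X] [DecidableEq X]

/-- canonical map from `I` to the elementary sheaf on its σ-costalk -/
def canMap (I : X ⥤ ModuleCat k) (σ : X) : I ⟶ elementaryInjectiveSheaf k σ (I.obj σ) :=
  elemLift LinearMap.id

lemma exists_section (I : X ⥤ ModuleCat k) (hI : Injective I) (σ : X)
    (hmax : ∀ ρ, σ < ρ → Subsingleton (I.obj ρ)) :
    ∃ w : elementaryInjectiveSheaf k σ (I.obj σ) ⟶ I, w ≫ canMap I σ = 𝟙 _ := by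
  haveI := skyToEl_mono (k := k) σ (I.obj σ)
  obtain ⟨w, hw⟩ := hI.factors (skyToI I σ hmax) (skyToEl σ (I.obj σ))
  refine ⟨w, elem_hom_ext _ _ ?_⟩
  ext y
  refine funext fun p => ?_
  show I.map (homOfLE p.down) (w.app σ y) = y p
  have hid : homOfLE p.down = 𝟙 σ := Subsingleton.elim _ _
  set g : (skyFunctor k σ (I.obj σ)).obj σ := (fun _ => y ⟨le_rfl⟩ : PLift (σ = σ) → I.obj σ)
    with hg
  have hv : (skyToEl σ (I.obj σ)).app σ g = y := by
    funext q
    show (if hh : σ = σ then g ⟨hh⟩ else 0) = y q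
    rw [dif_pos rfl]
  have hu : (skyToI I σ hmax).app σ g = y ⟨le_rfl⟩ := by
    show (if hh : σ = σ then I.map (eqToHom hh.symm) else 0)
        (if hh : σ = σ then g ⟨hh⟩ else 0) = y ⟨le_rfl⟩
    simp only [dif_pos rfl, eqToHom_refl, I.map_id]
    rfl
  have hcomp : w.app σ ((skyToEl σ (I.obj σ)).app σ g) = (skyToI I σ hmax).app σ g :=
    DFunLike.congr_fun (congrArg (fun n => ModuleCat.Hom.hom (NatTrans.app n σ)) hw) g
  rw [hv] at hcomp
  rw [hid, I.map_id]
  show w.app σ y = y p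
  rw [hcomp, hu]

/-- kernel of the canonical map, as an explicit functor -/
def kerFunctor (I : X ⥤ ModuleCat k) (σ : X) : X ⥤ ModuleCat k where
  obj τ := ModuleCat.of k (LinearMap.ker ((canMap I σ).app τ).hom)
  map {τ τ'} h := ModuleCat.ofHom <| LinearMap.restrict (I.map h).hom (p := LinearMap.ker ((canMap I σ).app τ).hom)
    (q := LinearMap.ker ((canMap I σ).app τ').hom) (by
      intro x hx
      rw [LinearMap.mem_ker] at hx ⊢
      have n := DFunLike.congr_fun (congrArg ModuleCat.Hom.hom ((canMap I σ).naturality h)) x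
      show (canMap I σ).app τ' (I.map h x) = 0
      rw [show (canMap I σ).app τ' (I.map h x)
          = (elementaryInjectiveSheaf k σ (I.obj σ)).map h ((canMap I σ).app τ x) from n,
        hx, map_zero])
  map_id τ := by
    ext x
    show I.map (𝟙 τ) x.1 = x.1
    rw [I.map_id]
    rfl
  map_comp {τ τ' τ''} f g := by
    ext x
    show I.map (f ≫ g) x.1 = I.map g (I.map f x.1)
    rw [I.map_comp]
    rfl

def kerι (I : X ⥤ ModuleCat k) (σ : X) : kerFunctor I σ ⟶ I where
  app τ := ModuleCat.ofHom (LinearMap.ker ((canMap I σ).app τ).hom).subtype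
  naturality := by intro τ τ' h; rfl

def kerRetr (I : X ⥤ ModuleCat k) (σ : X)
    (w : elementaryInjectiveSheaf k σ (I.obj σ) ⟶ I) (hwa : w ≫ canMap I σ = 𝟙 _) :
    I ⟶ kerFunctor I σ where
  app τ := ModuleCat.ofHom <| LinearMap.codRestrict (LinearMap.ker ((canMap I σ).app τ).hom)
    (LinearMap.id - (w.app τ).hom.comp ((canMap I σ).app τ).hom) (by
      intro x
      rw [LinearMap.mem_ker]
      have h1 : (canMap I σ).app τ (w.app τ ((canMap I σ).app τ x)) = (canMap I σ).app τ x :=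
        DFunLike.congr_fun (congrArg (fun n => ModuleCat.Hom.hom (NatTrans.app n τ)) hwa) ((canMap I σ).app τ x)
      show (canMap I σ).app τ (x - w.app τ ((canMap I σ).app τ x)) = 0
      rw [map_sub, h1, sub_self])
  naturality := by
    intro τ τ' h
    ext x
    refine Subtype.ext ?_
    show I.map h x - w.app τ' ((canMap I σ).app τ' (I.map h x))
        = I.map h (x - w.app τ ((canMap I σ).app τ x))
    have n1 : (canMap I σ).app τ' (I.map h x)
        = (elementaryInjectiveSheaf k σ (I.obj σ)).map h ((canMap I σ).app τ x) :=
      DFunLike.congr_fun (congrArg ModuleCat.Hom.hom ((canMap I σ).naturality h)) x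
    have n2 : w.app τ' ((elementaryInjectiveSheaf k σ (I.obj σ)).map h ((canMap I σ).app τ x))
        = I.map h (w.app τ ((canMap I σ).app τ x)) :=
      DFunLike.congr_fun (congrArg ModuleCat.Hom.hom (w.naturality h)) ((canMap I σ).app τ x)
    rw [map_sub, n1, n2]

lemma kerι_comp_canMap (I : X ⥤ ModuleCat k) (σ : X) : kerι I σ ≫ canMap I σ = 0 := by
  ext τ x
  have hx := x.2
  rw [LinearMap.mem_ker] at hx
  show (canMap I σ).app τ x.1 = (0 : kerFunctor I σ ⟶ elementaryInjectiveSheaf k σ (I.obj σ)).app τ x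
  rw [hx]
  rfl

lemma kerι_comp_retr (I : X ⥤ ModuleCat k) (σ : X)
    (w : elementaryInjectiveSheaf k σ (I.obj σ) ⟶ I) (hwa : w ≫ canMap I σ = 𝟙 _) :
    kerι I σ ≫ kerRetr I σ w hwa = 𝟙 _ := by
  ext τ x
  refine Subtype.ext ?_
  have hx := x.2
  rw [LinearMap.mem_ker] at hx
  show x.1 - w.app τ ((canMap I σ).app τ x.1) = x.1
  rw [hx, map_zero, sub_zero]

lemma w_comp_retr (I : X ⥤ ModuleCat k) (σ : X)
    (w : elementaryInjectiveSheaf k σ (I.obj σ) ⟶ I) (hwa : w ≫ canMap I σ = 𝟙 _) :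
    w ≫ kerRetr I σ w hwa = 0 := by
  ext τ y
  refine Subtype.ext ?_
  have h1 : (canMap I σ).app τ (w.app τ y) = y :=
    DFunLike.congr_fun (congrArg (fun n => ModuleCat.Hom.hom (NatTrans.app n τ)) hwa) y
  show w.app τ y - w.app τ ((canMap I σ).app τ (w.app τ y)) = 0
  rw [h1, sub_self]

lemma sum_eq_id (I : X ⥤ ModuleCat k) (σ : X)
    (w : elementaryInjectiveSheaf k σ (I.obj σ) ⟶ I) (hwa : w ≫ canMap I σ = 𝟙 _) :
    canMap I σ ≫ w + kerRetr I σ w hwa ≫ kerι I σ = 𝟙 I := by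
  ext τ x
  rw [NatTrans.app_add]
  show w.app τ ((canMap I σ).app τ x) + (x - w.app τ ((canMap I σ).app τ x)) = x
  rw [add_sub_cancel]

lemma ker_injective (I : X ⥤ ModuleCat k) (hI : Injective I) (σ : X)
    (w : elementaryInjectiveSheaf k σ (I.obj σ) ⟶ I) (hwa : w ≫ canMap I σ = 𝟙 _) :
    Injective (kerFunctor I σ) := by
  constructor
  intro P Q f m hm
  obtain ⟨h, hh⟩ := hI.factors (f ≫ kerι I σ) m
  refine ⟨h ≫ kerRetr I σ w hwa, ?_⟩
  rw [← Category.assoc, hh, Category.assoc, kerι_comp_retr, Category.comp_id]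

noncomputable def splitIso (I : X ⥤ ModuleCat k) (σ : X)
    (w : elementaryInjectiveSheaf k σ (I.obj σ) ⟶ I) (hwa : w ≫ canMap I σ = 𝟙 _) :
    I ≅ (elementaryInjectiveSheaf k σ (I.obj σ)) ⊞ (kerFunctor I σ) where
  hom := biprod.lift (canMap I σ) (kerRetr I σ w hwa)
  inv := biprod.desc w (kerι I σ)
  hom_inv_id := by rw [biprod.lift_desc, sum_eq_id]
  inv_hom_id := by
    apply biprod.hom_ext' <;> apply biprod.hom_ext <;>
      simp [hwa, w_comp_retr, kerι_comp_canMap, kerι_comp_retr]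

lemma ker_obj_subsingleton_self (I : X ⥤ ModuleCat k) (σ : X) :
    Subsingleton ((kerFunctor I σ).obj σ) := by
  constructor
  intro x y
  refine Subtype.ext ?_
  have hx := x.2
  have hy := y.2
  rw [LinearMap.mem_ker] at hx hy
  have ex := congrFun hx (⟨le_rfl⟩ : PLift (σ ≤ σ))
  have ey := congrFun hy (⟨le_rfl⟩ : PLift (σ ≤ σ))
  have hid : homOfLE (le_rfl : σ ≤ σ) = 𝟙 σ := Subsingleton.elim _ _
  have ex' : I.map (homOfLE (le_rfl : σ ≤ σ)) x.1 = 0 := ex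
  have ey' : I.map (homOfLE (le_rfl : σ ≤ σ)) y.1 = 0 := ey
  rw [hid, I.map_id] at ex' ey'
  have : x.1 = 0 := ex'
  have hy0 : y.1 = 0 := ey'
  rw [this, hy0]

lemma ker_obj_subsingleton (I : X ⥤ ModuleCat k) (σ ρ : X)
    (h : Subsingleton (I.obj ρ)) : Subsingleton ((kerFunctor I σ).obj ρ) := by
  constructor
  intro x y
  exact Subtype.ext (@Subsingleton.elim _ h _ _)

end Aux3

section Aux4
variable {k : Type} [Field k] {X : Type} [PartialOrder X] [DecidableEq X]

lemma elMap_add {σ : X} {A B : Type} [AddCommGroup A] [Module k A] [AddCommGroup B] [Module k B]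
    (φ ψ : A →ₗ[k] B) : elMap (σ := σ) φ + elMap ψ = elMap (φ + ψ) := by
  ext τ g
  rw [NatTrans.app_add]
  refine funext fun p => ?_
  rfl

/-- elementary sheaf on a product splits -/
noncomputable def elSplit (σ : X) (A B : Type) [AddCommGroup A] [Module k A]
    [AddCommGroup B] [Module k B] :
    elementaryInjectiveSheaf k σ (A × B)
      ≅ (elementaryInjectiveSheaf k σ A) ⊞ (elementaryInjectiveSheaf k σ B) where
  hom := biprod.lift (elMap (LinearMap.fst k A B)) (elMap (LinearMap.snd k A B))
  inv := biprod.desc (elMap (LinearMap.inl k A B)) (elMap (LinearMap.inr k A B))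
  hom_inv_id := by
    rw [biprod.lift_desc, elMap_comp, elMap_comp, elMap_add]
    have e : (LinearMap.inl k A B).comp (LinearMap.fst k A B)
        + (LinearMap.inr k A B).comp (LinearMap.snd k A B) = LinearMap.id := by
      apply LinearMap.ext
      intro x
      show ((x.1, 0) : A × B) + ((0, x.2) : A × B) = x
      ext <;> simp
    rw [e, elMap_id]
  inv_hom_id := by
    apply biprod.hom_ext' <;> apply biprod.hom_ext <;>
      simp only [biprod.inl_desc_assoc, biprod.inr_desc_assoc, Category.assoc,
        biprod.lift_fst, biprod.lift_snd, Category.comp_id, Category.id_comp,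
        biprod.inl_fst, biprod.inl_snd, biprod.inr_fst, biprod.inr_snd, elMap_comp]
    · rw [show (LinearMap.fst k A B).comp (LinearMap.inl k A B) = LinearMap.id from rfl, elMap_id]
    · rw [show (LinearMap.snd k A B).comp (LinearMap.inl k A B) = 0 from rfl, elMap_zero]
    · rw [show (LinearMap.fst k A B).comp (LinearMap.inr k A B) = 0 from rfl, elMap_zero]
    · rw [show (LinearMap.snd k A B).comp (LinearMap.inr k A B) = LinearMap.id from rfl, elMap_id]

/-- coproducts commute with binary biproducts -/
noncomputable def sigmaBiprodIso (F G : X → (X ⥤ ModuleCat k)) :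
    (∐ fun ρ => F ρ ⊞ G ρ) ≅ (∐ F) ⊞ (∐ G) where
  hom := Sigma.desc fun ρ => biprod.map (Sigma.ι F ρ) (Sigma.ι G ρ)
  inv := biprod.desc (Sigma.desc fun ρ => biprod.inl ≫ Sigma.ι (fun ρ => F ρ ⊞ G ρ) ρ)
    (Sigma.desc fun ρ => biprod.inr ≫ Sigma.ι (fun ρ => F ρ ⊞ G ρ) ρ)
  hom_inv_id := by
    apply Sigma.hom_ext
    intro ρ
    apply biprod.hom_ext' <;> simp
  inv_hom_id := by
    apply biprod.hom_ext' <;> apply Sigma.hom_ext <;> intro ρ <;> simp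

/-- the map collapsing an elementary sheaf with skyscraper coefficients -/
def collapse (σ ρ : X) (M : Type) [AddCommGroup M] [Module k M] :
    elementaryInjectiveSheaf k ρ (PLift (ρ = σ) → M) ⟶ elementaryInjectiveSheaf k σ M where
  app τ := ModuleCat.ofHom
    { toFun := fun g p => if h : ρ = σ then g ⟨le_of_le_of_eq p.down h.symm⟩ ⟨h⟩ else 0
      map_add' := by
        intro x y
        refine funext fun p => ?_
        show (if h : ρ = σ then (x + y) ⟨le_of_le_of_eq p.down h.symm⟩ ⟨h⟩ else 0)
            = (if h : ρ = σ then x ⟨le_of_le_of_eq p.down h.symm⟩ ⟨h⟩ else 0)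
              + (if h : ρ = σ then y ⟨le_of_le_of_eq p.down h.symm⟩ ⟨h⟩ else 0)
        by_cases h : ρ = σ
        · simp only [dif_pos h]; rfl
        · simp only [dif_neg h, add_zero]
      map_smul' := by
        intro c x
        refine funext fun p => ?_
        show (if h : ρ = σ then (c • x) ⟨le_of_le_of_eq p.down h.symm⟩ ⟨h⟩ else 0)
            = (RingHom.id k) c • (if h : ρ = σ then x ⟨le_of_le_of_eq p.down h.symm⟩ ⟨h⟩ else 0)
        by_cases h : ρ = σ
        · simp only [dif_pos h]; rfl
        · simp only [dif_neg h, RingHom.id_apply, smul_zero] }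
  naturality := by
    intro τ τ' h
    ext g
    refine funext fun p => ?_
    show (if hh : ρ = σ then
          ((elementaryInjectiveSheaf k ρ (PLift (ρ = σ) → M)).map h g)
            ⟨le_of_le_of_eq p.down hh.symm⟩ ⟨hh⟩ else 0)
        = (if hh : ρ = σ then
            g ⟨le_of_le_of_eq ((leOfHom h).trans p.down) hh.symm⟩ ⟨hh⟩ else 0)
    by_cases hh : ρ = σ
    · simp only [dif_pos hh]
      rfl
    · simp only [dif_neg hh]

lemma collapse_comp_const (σ : X) (M : Type) [AddCommGroup M] [Module k M] :
    collapse σ σ M ≫ elMap (constFun k (σ = σ) M) = 𝟙 _ := by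
  apply elem_hom_ext
  ext g
  funext q t
  show (if h : σ = σ then g ⟨le_of_le_of_eq q.down h.symm⟩ ⟨h⟩ else 0) = g q t
  rw [dif_pos rfl]

lemma const_comp_collapse (σ : X) (M : Type) [AddCommGroup M] [Module k M] :
    elMap (constFun k (σ = σ) M) ≫ collapse σ σ M = 𝟙 _ := by
  apply elem_hom_ext
  ext y
  refine funext fun p => ?_
  show (if h : σ = σ then y ⟨le_of_le_of_eq p.down h.symm⟩ else 0) = y p
  rw [dif_pos rfl]

/-- the coproduct of elementary sheaves with skyscraper coefficients collapses -/
noncomputable def sigmaSkyIso (σ : X) (M : Type) [AddCommGroup M] [Module k M] :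
    (∐ fun ρ : X => elementaryInjectiveSheaf k ρ (PLift (ρ = σ) → M))
      ≅ elementaryInjectiveSheaf k σ M where
  hom := Sigma.desc fun ρ => collapse σ ρ M
  inv := elMap (constFun k (σ = σ) M)
    ≫ Sigma.ι (fun ρ : X => elementaryInjectiveSheaf k ρ (PLift (ρ = σ) → M)) σ
  hom_inv_id := by
    apply Sigma.hom_ext
    intro ρ
    rw [Category.comp_id, ← Category.assoc, Sigma.ι_desc]
    by_cases hρ : ρ = σ
    · subst hρ
      rw [← Category.assoc, collapse_comp_const, Category.id_comp]
    · apply hom_ext_of_subsingleton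
      intro τ
      haveI := subsingleton_plift_fun hρ M
      exact el_obj_subsingleton ρ τ
  inv_hom_id := by
    rw [Category.assoc, Sigma.ι_desc]
    exact const_comp_collapse σ M

lemma iso_zero_sum (I : X ⥤ ModuleCat k) (hs : ∀ ρ, Subsingleton (I.obj ρ)) :
    ∃ V : X → ModuleCat k,
      Nonempty (I ≅ ∐ fun σ : X => elementaryInjectiveSheaf k σ (V σ)) := by
  refine ⟨fun _ => ModuleCat.of k PUnit, ⟨⟨0, 0, ?_, ?_⟩⟩⟩
  · exact hom_ext_of_subsingleton hs _ _
  · apply Sigma.hom_ext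
    intro ρ
    apply hom_ext_of_subsingleton
    intro τ
    exact el_obj_subsingleton ρ τ

end Aux4

section Main
variable {k : Type} [Field k] {X : Type} [PartialOrder X] [DecidableEq X]

lemma main_aux : ∀ (n : ℕ) (S : Finset X) (_ : S.card ≤ n) (I : X ⥤ ModuleCat k)
    (_ : Injective I) (_ : ∀ ρ ∉ S, Subsingleton (I.obj ρ)),
    ∃ V : X → ModuleCat k,
      Nonempty (I ≅ ∐ fun σ : X => elementaryInjectiveSheaf k σ (V σ)) := by
  intro n
  induction n with
  | zero =>
    intro S hS I hI hs
    have hSe : S = ∅ := Finset.card_eq_zero.1 (Nat.le_zero.1 hS)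
    apply iso_zero_sum
    intro ρ
    refine hs ρ ?_
    rw [hSe]
    exact Finset.notMem_empty ρ
  | succ n ih =>
    intro S hS I hI hs
    classical
    by_cases hTne : (S.filter (fun ρ => ¬ Subsingleton (I.obj ρ))).Nonempty
    · obtain ⟨σ, hσT, hσmax⟩ : ∃ m ∈ S.filter (fun ρ => ¬ Subsingleton (I.obj ρ)),
          ∀ x ∈ S.filter (fun ρ => ¬ Subsingleton (I.obj ρ)), ¬m < x := by
        obtain ⟨i, hi⟩ := Finset.exists_maximal hTne
        exact ⟨i, hi.1, fun x hx hlt => lt_irrefl i (lt_of_lt_of_le hlt (hi.2 hx hlt.le))⟩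
      have hσS : σ ∈ S := (Finset.mem_filter.1 hσT).1
      have hmax : ∀ ρ, σ < ρ → Subsingleton (I.obj ρ) := by
        intro ρ hρ
        by_cases hρS : ρ ∈ S
        · by_contra hc
          exact hσmax ρ (Finset.mem_filter.2 ⟨hρS, hc⟩) hρ
        · exact hs ρ hρS
      obtain ⟨w, hwa⟩ := exists_section I hI σ hmax
      have hKs : ∀ ρ, ρ ∉ S.erase σ → Subsingleton ((kerFunctor I σ).obj ρ) := by
        intro ρ hρ
        by_cases hρσ : ρ = σ
        · subst hρσ; exact ker_obj_subsingleton_self I ρ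
        · exact ker_obj_subsingleton I σ ρ
            (hs ρ (fun hmem => hρ (Finset.mem_erase.2 ⟨hρσ, hmem⟩)))
      obtain ⟨V', ⟨e⟩⟩ := ih (S.erase σ)
        (by have := Finset.card_erase_of_mem hσS; omega)
        (kerFunctor I σ) (ker_injective I hI σ w hwa) hKs
      refine ⟨fun ρ => ModuleCat.of k ((PLift (ρ = σ) → I.obj σ) × V' ρ), ⟨?_⟩⟩
      refine (splitIso I σ w hwa).trans ?_
      refine (biprod.mapIso ((sigmaSkyIso σ (I.obj σ)).symm) e).trans ?_
      refine (sigmaBiprodIso _ _).symm.trans ?_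
      exact Sigma.mapIso fun ρ => (elSplit ρ (PLift (ρ = σ) → I.obj σ) (V' ρ)).symm
    · apply iso_zero_sum
      intro ρ
      by_cases hρ : ρ ∈ S
      · by_contra hc
        exact hTne ⟨ρ, Finset.mem_filter.2 ⟨hρ, hc⟩⟩
      · exact hs ρ hρ

end Main

/-- Every injective cellular sheaf on a finite poset decomposes as a direct sum of
elementary injective sheaves. -/
theorem injective_iso_direct_sum_elementary (k : Type) [Field k] {X : Type}
    [PartialOrder X] [Fintype X] (I : X ⥤ ModuleCat k) (hI : Injective I) :
    ∃ V : X → ModuleCat k,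
      Nonempty (I ≅ ∐ fun σ : X => elementaryInjectiveSheaf k σ (V σ)) := by
  classical
  exact main_aux Finset.univ.card Finset.univ le_rfl I hI
    (fun ρ h => absurd (Finset.mem_univ ρ) h)
end

section
/- Let X be a finite poset. Every projective object of the functor category [X, Vect] is isomorphic to a finite direct sum of elementary projectives ⊕_σ {σ}^{V_σ}, where {σ}^V is the constant sheaf with value V supported on the up-set {τ : σ ≤ τ}. -/
/-!
STATEMENT 10: Let `X` be a finite poset.  Every projective object of the functor
category `[X, Vect_k]` is isomorphic to a (finite) direct sum of elementary
projectives `⊕_σ {σ}^{V_σ}`, where `{σ}^V` is the constant sheaf with value `V`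
supported on the up-set `{τ : σ ≤ τ}`.
-/

open CategoryTheory Limits

/-- The elementary projective cellular sheaf `{σ}^W`, supported on the open star
`{τ : σ ≤ τ}` with value `W` and identity restriction maps. -/
noncomputable def elementaryProjectiveSheaf (k : Type) [Field k] {X : Type} [PartialOrder X] (σ : X)
    (W : Type) [AddCommGroup W] [Module k W] : X ⥤ ModuleCat k where
  obj τ := ModuleCat.of k (PLift (σ ≤ τ) →₀ W)
  map {τ τ'} h := ModuleCat.ofHom (Finsupp.lmapDomain W k
    (fun p : PLift (σ ≤ τ) => (⟨p.down.trans (leOfHom h)⟩ : PLift (σ ≤ τ'))))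
  map_id τ := by
    have : (fun p => (⟨p.down.trans (leOfHom (𝟙 τ))⟩ : PLift (σ ≤ τ))) = id :=
      funext fun p => rfl
    apply ModuleCat.hom_ext
    show Finsupp.lmapDomain W k _ = _
    rw [this, Finsupp.lmapDomain_id]
    rfl
  map_comp {τ τ' τ''} h h' := by
    apply ModuleCat.hom_ext
    show Finsupp.lmapDomain W k _ = _
    rw [show (fun p => (⟨p.down.trans (leOfHom (h ≫ h'))⟩ : PLift (σ ≤ τ''))) =
        (fun p => (⟨p.down.trans (leOfHom h')⟩ : PLift (σ ≤ τ''))) ∘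
          (fun p => (⟨p.down.trans (leOfHom h)⟩ : PLift (σ ≤ τ'))) from funext fun p => rfl,
      Finsupp.lmapDomain_comp]
    rfl


namespace ProjClassify

variable (k : Type) [Field k] {X : Type} [PartialOrder X] [Fintype X] (P : X ⥤ ModuleCat k)

/-- The sum of images from strictly below `τ`. -/
noncomputable def Usub (τ : X) : Submodule k (P.obj τ) :=
  ⨆ ρ : {ρ : X // ρ < τ}, LinearMap.range (P.map (homOfLE ρ.2.le)).hom

/-- A chosen complement of `Usub`. -/
noncomputable def Csub (τ : X) : Submodule k (P.obj τ) :=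
  (Submodule.exists_isCompl (Usub k P τ)).choose

lemma isCompl_UC (τ : X) : IsCompl (Usub k P τ) (Csub k P τ) :=
  (Submodule.exists_isCompl (Usub k P τ)).choose_spec

noncomputable def Vmod (σ : X) : ModuleCat k := ModuleCat.of k (Csub k P σ)

noncomputable abbrev Efam (σ : X) : X ⥤ ModuleCat k :=
  elementaryProjectiveSheaf k σ (Vmod k P σ)

/-- The canonical map `{σ}^{C σ} ⟶ P`. -/
noncomputable def eta (σ : X) : Efam k P σ ⟶ P where
  app τ := ModuleCat.ofHom (Finsupp.lsum k fun p : PLift (σ ≤ τ) =>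
    (P.map (homOfLE p.down)).hom ∘ₗ (Csub k P σ).subtype)
  naturality {τ τ'} h := by
    apply ModuleCat.hom_ext
    refine Finsupp.lhom_ext fun p w => ?_
    show (Finsupp.lsum k _) (Finsupp.lmapDomain _ k _ (Finsupp.single p w)) = _
    rw [Finsupp.lmapDomain_apply, Finsupp.mapDomain_single, Finsupp.lsum_single]
    show _ = P.map h ((Finsupp.lsum k _) (Finsupp.single p w))
    rw [Finsupp.lsum_single]
    show P.map (homOfLE _) ((Csub k P σ).subtype w) =
      (P.map (homOfLE p.down) ≫ P.map h) ((Csub k P σ).subtype w)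
    rw [← P.map_comp]
    have : homOfLE p.down ≫ h = homOfLE (p.down.trans (leOfHom h)) := Subsingleton.elim _ _
    rw [this]

noncomputable def Fc : X ⥤ ModuleCat k := ∐ (Efam k P)

noncomputable def phi : Fc k P ⟶ P := Sigma.desc (eta k P)

lemma ι_phi (σ : X) : Sigma.ι (Efam k P) σ ≫ phi k P = eta k P σ := by
  simp [phi]

lemma ι_phi_app (σ τ : X) (x : (Efam k P σ).obj τ) :
    (phi k P).app τ ((Sigma.ι (Efam k P) σ).app τ x) = (eta k P σ).app τ x := by
  conv_rhs => rw [← ι_phi k P σ]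
  rfl

lemma eta_single {σ τ : X} (p : PLift (σ ≤ τ)) (w : Csub k P σ) :
    (eta k P σ).app τ (Finsupp.single p w) = P.map (homOfLE p.down) w := by
  show (Finsupp.lsum k _) (Finsupp.single p w) = _
  exact Finsupp.lsum_single _ _ _ _

/-- the injection of the top piece `C τ` into `(∐ E).obj τ`. -/
noncomputable def jmap (τ : X) : Csub k P τ →ₗ[k] (Fc k P).obj τ :=
  ((((Sigma.ι (Efam k P) τ).app τ).hom : (Efam k P τ).obj τ →ₗ[k] (Fc k P).obj τ).comp
    (Finsupp.lsingle (⟨le_refl τ⟩ : PLift (τ ≤ τ))))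

lemma phi_jmap (τ : X) (w : Csub k P τ) :
    (phi k P).app τ (jmap k P τ w) = (w : P.obj τ) := by
  show (phi k P).app τ ((Sigma.ι (Efam k P) τ).app τ (Finsupp.single _ w)) = _
  erw [ι_phi_app, eta_single]
  rw [show homOfLE (le_refl τ) = 𝟙 τ from rfl, P.map_id]
  rfl

/-- pointwise, the coproduct injections are jointly surjective. -/
lemma sup_range_ι (τ : X) :
    (⨆ σ : X, LinearMap.range (((Sigma.ι (Efam k P) σ).app τ).hom
      : (Efam k P σ).obj τ →ₗ[k] (Fc k P).obj τ)) = ⊤ := by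
  set S := (⨆ σ : X, LinearMap.range (((Sigma.ι (Efam k P) σ).app τ).hom
      : (Efam k P σ).obj τ →ₗ[k] (Fc k P).obj τ)) with hS
  have hcol : IsColimit (((evaluation X (ModuleCat k)).obj τ).mapCocone
      (colimit.cocone (Discrete.functor (Efam k P)))) :=
    isColimitOfPreserves _ (colimit.isColimit _)
  have hq : (ModuleCat.ofHom S.mkQ : (((evaluation X (ModuleCat k)).obj τ).mapCocone
      (colimit.cocone (Discrete.functor (Efam k P)))).pt ⟶
        ModuleCat.of k ((Fc k P).obj τ ⧸ S)) = 0 := by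
    refine IsColimit.hom_ext (W := ModuleCat.of k ((Fc k P).obj τ ⧸ S)) (f := ModuleCat.ofHom S.mkQ) (f' := 0) hcol fun j => ?_
    obtain ⟨σ⟩ := j
    rw [comp_zero]
    refine ModuleCat.hom_ext (LinearMap.ext fun x => ?_)
    show S.mkQ ((Sigma.ι (Efam k P) σ).app τ x) = 0
    rw [Submodule.mkQ_apply, Submodule.Quotient.mk_eq_zero]
    have hmem : (Sigma.ι (Efam k P) σ).app τ x ∈ S :=
      le_iSup (fun σ => LinearMap.range (((Sigma.ι (Efam k P) σ).app τ).hom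
        : (Efam k P σ).obj τ →ₗ[k] (Fc k P).obj τ)) σ ⟨x, rfl⟩
    exact hmem
  rw [eq_top_iff]
  intro x _
  have : S.mkQ x = 0 := congrArg (fun f => ModuleCat.Hom.hom f x) hq
  rw [Submodule.mkQ_apply] at this
  exact (Submodule.Quotient.mk_eq_zero S).mp this

lemma phi_nat {ρ τ : X} (h : ρ ⟶ τ) (x : (Fc k P).obj ρ) :
    (phi k P).app τ ((Fc k P).map h x) = P.map h ((phi k P).app ρ x) :=
  ConcreteCategory.congr_hom ((phi k P).naturality h) x

lemma phi_surj (τ : X) : Function.Surjective ((phi k P).app τ) := by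
  induction τ using WellFoundedLT.induction with
  | _ τ IH =>
    show Function.Surjective ((phi k P).app τ).hom
    rw [← LinearMap.range_eq_top, eq_top_iff, ← (isCompl_UC k P τ).sup_eq_top]
    refine sup_le ?_ ?_
    · refine iSup_le fun ρ => ?_
      rintro _ ⟨y, rfl⟩
      obtain ⟨z, rfl⟩ := IH ρ ρ.2 y
      exact ⟨(Fc k P).map (homOfLE ρ.2.le) z, phi_nat k P _ z⟩
    · intro w hw
      exact ⟨jmap k P τ ⟨w, hw⟩, phi_jmap k P τ ⟨w, hw⟩⟩

noncomputable def Asub (τ : X) : Submodule k ((Fc k P).obj τ) :=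
  ⨆ ρ : {ρ : X // ρ < τ}, LinearMap.range (((Fc k P).map (homOfLE ρ.2.le)).hom
    : (Fc k P).obj ρ →ₗ[k] (Fc k P).obj τ)

lemma phiA (τ : X) : ∀ a ∈ Asub k P τ, (phi k P).app τ a ∈ Usub k P τ := by
  intro a ha
  refine Submodule.iSup_induction _ (motive := fun a => (phi k P).app τ a ∈ Usub k P τ) ha ?_ ?_ ?_
  · rintro ρ _ ⟨y, rfl⟩
    rw [phi_nat]
    exact le_iSup (fun ρ : {ρ : X // ρ < τ} =>
      LinearMap.range (P.map (homOfLE ρ.2.le)).hom) ρ ⟨_, rfl⟩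
  · show (phi k P).app τ 0 ∈ _
    rw [map_zero]; exact zero_mem _
  · intro x y hx hy
    show (phi k P).app τ (x + y) ∈ _
    rw [map_add]; exact add_mem hx hy

lemma A_sup_j (τ : X) : Asub k P τ ⊔ LinearMap.range (jmap k P τ) = ⊤ := by
  erw [eq_top_iff, ← sup_range_ι k P τ]
  refine iSup_le fun σ => ?_
  rintro _ ⟨f, rfl⟩
  induction f using Finsupp.induction_linear with
  | zero => erw [map_zero]; exact zero_mem _
  | add f g hf hg => erw [map_add]; exact add_mem hf hg
  | single p w =>
    by_cases hστ : σ = τ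
    · subst hστ
      have hp : p = ⟨le_refl σ⟩ := by cases p; rfl
      subst hp
      exact Submodule.mem_sup_right ⟨w, rfl⟩
    · have hlt : σ < τ := lt_of_le_of_ne p.down hστ
      have h1 := ConcreteCategory.congr_hom
        ((Sigma.ι (Efam k P) σ).naturality (homOfLE hlt.le))
        (Finsupp.single (⟨le_refl σ⟩ : PLift (σ ≤ σ)) w)
      have hps : (Finsupp.single p w : PLift (σ ≤ τ) →₀ Vmod k P σ) =
          Finsupp.mapDomain (fun q : PLift (σ ≤ σ) =>
            (⟨q.down.trans hlt.le⟩ : PLift (σ ≤ τ)))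
            (Finsupp.single ⟨le_refl σ⟩ w) := by
        rw [Finsupp.mapDomain_single]
      have h2 : (Sigma.ι (Efam k P) σ).app τ (Finsupp.single p w) =
          (Fc k P).map (homOfLE hlt.le)
            ((Sigma.ι (Efam k P) σ).app σ (Finsupp.single ⟨le_refl σ⟩ w)) := by
        rw [hps]
        exact h1
      rw [h2]
      exact Submodule.mem_sup_left (le_iSup (fun ρ : {ρ : X // ρ < τ} =>
        LinearMap.range (((Fc k P).map (homOfLE ρ.2.le)).hom
          : (Fc k P).obj ρ →ₗ[k] (Fc k P).obj τ)) ⟨σ, hlt⟩ ⟨_, rfl⟩)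

lemma e_inj (s : P ⟶ Fc k P) (hs : s ≫ phi k P = 𝟙 P) (τ : X) :
    Function.Injective ((phi k P ≫ s).app τ) := by
  induction τ using WellFoundedLT.induction with
  | _ τ IH =>
    have hee : (phi k P ≫ s) ≫ (phi k P ≫ s) = phi k P ≫ s := by
      rw [Category.assoc, ← Category.assoc s, hs, Category.id_comp]
    -- pointwise identity below τ
    have hid : ∀ (ρ : X), ρ < τ → ∀ x, (phi k P ≫ s).app ρ x = x := by
      intro ρ hρ x
      apply IH ρ hρ
      exact ConcreteCategory.congr_hom (congrArg (fun α : Fc k P ⟶ Fc k P => α.app ρ) hee) x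
    -- e is the identity on Asub
    have eA : ∀ a ∈ Asub k P τ, (phi k P ≫ s).app τ a = a := by
      intro a ha
      refine Submodule.iSup_induction _
        (motive := fun a => (phi k P ≫ s).app τ a = a) ha ?_ ?_ ?_
      · rintro ρ _ ⟨y, rfl⟩
        have hnat : (phi k P ≫ s).app τ ((Fc k P).map (homOfLE ρ.2.le) y)
            = (Fc k P).map (homOfLE ρ.2.le) ((phi k P ≫ s).app ρ y) :=
          ConcreteCategory.congr_hom ((phi k P ≫ s).naturality (homOfLE ρ.2.le)) y
        show (phi k P ≫ s).app τ ((Fc k P).map (homOfLE ρ.2.le) y) = _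
        rw [hnat, hid ρ ρ.2 y]
      · show (phi k P ≫ s).app τ 0 = 0
        rw [map_zero]
      · intro x y hx hy
        show (phi k P ≫ s).app τ (x + y) = x + y
        rw [map_add, hx, hy]
    -- the effect of e on the top piece
    have eJ : ∀ w : Csub k P τ, ∃ a ∈ Asub k P τ,
        (phi k P ≫ s).app τ (jmap k P τ w) = a + jmap k P τ w := by
      intro w
      have hw : s.app τ (w : P.obj τ) ∈ Asub k P τ ⊔ LinearMap.range (jmap k P τ) := by
        rw [A_sup_j]; trivial
      obtain ⟨a, ha, z, ⟨w', rfl⟩, hsum⟩ := Submodule.mem_sup.mp hw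
      have hphi_s : (phi k P).app τ (s.app τ (w : P.obj τ)) = (w : P.obj τ) :=
        ConcreteCategory.congr_hom (congrArg (fun α : P ⟶ P => α.app τ) hs) (w : P.obj τ)
      have hdecomp : (w : P.obj τ) = (phi k P).app τ a + (w' : P.obj τ) := by
        rw [← hphi_s, ← hsum, map_add, phi_jmap]
      have hsub : ((w : P.obj τ) - (w' : P.obj τ)) ∈ Usub k P τ := by
        rw [hdecomp]; simpa using phiA k P τ a ha
      have hsubC : ((w : P.obj τ) - (w' : P.obj τ)) ∈ Csub k P τ := sub_mem w.2 w'.2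
      have hww' : w' = w := by
        have h0 : (w : P.obj τ) - (w' : P.obj τ) = 0 :=
          (Submodule.mem_bot k).mp
            ((isCompl_UC k P τ).disjoint.le_bot ⟨hsub, hsubC⟩)
        ext
        exact (sub_eq_zero.mp h0).symm
      refine ⟨a, ha, ?_⟩
      show s.app τ ((phi k P).app τ (jmap k P τ w)) = _
      rw [phi_jmap, ← hsum, hww']
    -- injectivity
    have hker : ∀ x, (phi k P ≫ s).app τ x = 0 → x = 0 := by
      intro x hx
      have hxmem : x ∈ Asub k P τ ⊔ LinearMap.range (jmap k P τ) := by
        rw [A_sup_j]; trivial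
      obtain ⟨a, ha, z, ⟨w, rfl⟩, hsum⟩ := Submodule.mem_sup.mp hxmem
      obtain ⟨a', ha', ha'eq⟩ := eJ w
      have h0 : a + (a' + jmap k P τ w) = 0 := by
        rw [← hx, ← hsum, map_add, eA a ha, ha'eq]
      have hjA : jmap k P τ w ∈ Asub k P τ := by
        have h1 : (a + a') + jmap k P τ w = 0 := by rw [add_assoc]; exact h0
        rw [eq_neg_of_add_eq_zero_right h1]
        exact neg_mem (add_mem ha ha')
      have hwU : (w : P.obj τ) ∈ Usub k P τ := by
        rw [← phi_jmap k P τ w]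
        exact phiA k P τ _ hjA
      have hw0 : w = 0 := by
        have h0' : (w : P.obj τ) = 0 :=
          (Submodule.mem_bot k).mp
            ((isCompl_UC k P τ).disjoint.le_bot ⟨hwU, w.2⟩)
        ext; exact h0'
      have hj0 : jmap k P τ w = 0 := by rw [hw0, map_zero]
      have ha'0 : a' = 0 := by
        rw [hj0, map_zero, add_zero] at ha'eq
        exact ha'eq.symm
      have ha0 : a = 0 := by
        rw [ha'0, hj0, add_zero, add_zero] at h0; exact h0
      rw [← hsum, ha0, hj0, add_zero]
    intro x y hxy
    have hd : (phi k P ≫ s).app τ (x - y) = 0 := by rw [map_sub, hxy, sub_self]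
    exact sub_eq_zero.mp (hker _ hd)

end ProjClassify

/-- Every projective cellular sheaf on a finite poset decomposes as a direct sum of
elementary projective sheaves. -/
theorem projective_iso_direct_sum_elementary (k : Type) [Field k] {X : Type}
    [PartialOrder X] [Fintype X] (P : X ⥤ ModuleCat k) (hP : Projective P) :
    ∃ V : X → ModuleCat k,
      Nonempty (P ≅ ∐ fun σ : X => elementaryProjectiveSheaf k σ (V σ)) := by
  haveI := hP
  refine ⟨ProjClassify.Vmod k P, ?_⟩
  haveI hepi_app : ∀ τ, Epi ((ProjClassify.phi k P).app τ) := fun τ =>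
    (ModuleCat.epi_iff_surjective _).mpr (ProjClassify.phi_surj k P τ)
  haveI hepi : Epi (ProjClassify.phi k P) := NatTrans.epi_of_epi_app _
  set s := Projective.factorThru (𝟙 P) (ProjClassify.phi k P) with hsdef
  have hs : s ≫ ProjClassify.phi k P = 𝟙 P := Projective.factorThru_comp _ _
  haveI hmono_app : ∀ τ, Mono ((ProjClassify.phi k P).app τ) := fun τ => by
    refine (ModuleCat.mono_iff_injective _).mpr ?_
    intro x y hxy
    refine ProjClassify.e_inj k P s hs τ ?_
    show s.app τ ((ProjClassify.phi k P).app τ x) = s.app τ ((ProjClassify.phi k P).app τ y)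
    rw [hxy]
  haveI hmono : Mono (ProjClassify.phi k P) := NatTrans.mono_of_mono_app _
  haveI : IsIso (ProjClassify.phi k P) := isIso_of_mono_of_epi _
  exact ⟨(asIso (ProjClassify.phi k P)).symm⟩
end
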